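/- arXiv:1004.3878 — 2 statements merged into one kernel-verified Lean document; each statement's English description precedes it below -/
import Mathlib

section
/- For any N×d complex matrix D (d ≤ N) whose columns d_1,…,N have unit ℓ²-norm, the coherence μ = max_{i≠j} |⟨d_i, d_j⟩| satisfies the Welch lower bound μ ≥ √((N − d)/(d(N − 1))), provided N > d ≥ 1. -/
open Matrix

/-- The coherence of a dictionary: the maximum absolute inner product between distinct
columns, `μ = max_{i≠j} |⟨d_i, d_j⟩|`. -/
noncomputable def coherence {m n : Type*} [Fintype m] [Fintype n] (D : Matrix m n ℂ) : ℝ :=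
  sSup {r | ∃ i j, i ≠ j ∧ r = ‖(Dᴴ * D) i j‖}

private lemma welch_aux_mul_star (z : ℂ) : z * star z = (‖z‖ : ℂ) ^ 2 := by
  rw [show star z = (starRingEnd ℂ) z from rfl, Complex.mul_conj']

private lemma welch_aux_star_mul (z : ℂ) : star z * z = (‖z‖ : ℂ) ^ 2 := by
  rw [show star z = (starRingEnd ℂ) z from rfl, Complex.conj_mul']

/-- The Welch lower bound: for a `d × N` complex matrix `D` with `N > d ≥ 1` whose columns
have unit ℓ²-norm, the coherence satisfies `μ ≥ √((N − d)/(d(N − 1)))`. -/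
theorem welch_bound {d N : ℕ} (hd : 1 ≤ d) (hdN : d < N)
    (D : Matrix (Fin d) (Fin N) ℂ) (hunit : ∀ j, ∑ i, ‖D i j‖ ^ 2 = 1) :
    Real.sqrt (((N : ℝ) - d) / (d * ((N : ℝ) - 1))) ≤ coherence D := by
  classical
  set G : Matrix (Fin N) (Fin N) ℂ := Dᴴ * D with hGdef
  set A : Matrix (Fin d) (Fin d) ℂ := D * Dᴴ with hAdef
  have hdR : (1 : ℝ) ≤ (d : ℝ) := by exact_mod_cast hd
  have hNR : (d : ℝ) < (N : ℝ) := by exact_mod_cast hdN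
  have hN2 : (2 : ℝ) ≤ (N : ℝ) := by
    have : 2 ≤ N := by omega
    exact_mod_cast this
  have hd0 : (0 : ℝ) < d := by linarith
  have hN1 : (0 : ℝ) < (N : ℝ) - 1 := by linarith
  -- Hermitian symmetry of G, A
  have hGsymm : ∀ i j, G j i = (starRingEnd ℂ) (G i j) := by
    intro i j
    have : Gᴴ = G := by
      rw [hGdef, conjTranspose_mul, conjTranspose_conjTranspose]
    conv_lhs => rw [← this]
    simp [conjTranspose_apply]
  have hAsymm : ∀ i j, A j i = (starRingEnd ℂ) (A i j) := by
    intro i j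
    have : Aᴴ = A := by
      rw [hAdef, conjTranspose_mul, conjTranspose_conjTranspose]
    conv_lhs => rw [← this]
    simp [conjTranspose_apply]
  -- diagonal of G is 1
  have hGdiag : ∀ j, G j j = 1 := by
    intro j
    have : G j j = ((∑ i, ‖D i j‖ ^ 2 : ℝ) : ℂ) := by
      simp only [hGdef, mul_apply, conjTranspose_apply]
      push_cast
      exact Finset.sum_congr rfl fun i _ => welch_aux_star_mul (D i j)
    rw [this, hunit j]; norm_num
  -- diagonal of A
  set r : Fin d → ℝ := fun a => ∑ j, ‖D a j‖ ^ 2 with hrdef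
  have hAdiag : ∀ a, A a a = ((r a : ℝ) : ℂ) := by
    intro a
    simp only [hAdef, mul_apply, conjTranspose_apply, hrdef]
    push_cast
    exact Finset.sum_congr rfl fun j _ => welch_aux_mul_star (D a j)
  have hrsum : ∑ a, r a = (N : ℝ) := by
    rw [hrdef]
    rw [Finset.sum_comm]
    simp only [hunit, Finset.sum_const, Finset.card_univ, Fintype.card_fin, nsmul_eq_mul,
      mul_one]
  have hrnonneg : ∀ a, 0 ≤ r a := fun a => Finset.sum_nonneg fun j _ => sq_nonneg _
  -- trace identity: Frobenius norms agree
  have htr : ∑ i, ∑ j, ‖G i j‖ ^ 2 = ∑ a, ∑ b, ‖A a b‖ ^ 2 := by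
    have h1 : (G * G).trace = ((∑ i, ∑ j, ‖G i j‖ ^ 2 : ℝ) : ℂ) := by
      simp only [trace, diag, mul_apply]
      push_cast
      refine Finset.sum_congr rfl fun i _ => Finset.sum_congr rfl fun j _ => ?_
      rw [hGsymm i j, Complex.mul_conj']
    have h2 : (A * A).trace = ((∑ a, ∑ b, ‖A a b‖ ^ 2 : ℝ) : ℂ) := by
      simp only [trace, diag, mul_apply]
      push_cast
      refine Finset.sum_congr rfl fun a _ => Finset.sum_congr rfl fun b _ => ?_
      rw [hAsymm a b, Complex.mul_conj']
    have h3 : (G * G).trace = (A * A).trace := by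
      rw [hGdef, hAdef]
      calc ((Dᴴ * D) * (Dᴴ * D)).trace = (Dᴴ * (D * (Dᴴ * D))).trace := by
              rw [Matrix.mul_assoc]
        _ = ((D * (Dᴴ * D)) * Dᴴ).trace := trace_mul_comm _ _
        _ = ((D * Dᴴ) * (D * Dᴴ)).trace := by rw [← Matrix.mul_assoc, ← Matrix.mul_assoc]
    have := h1.symm.trans (h3.trans h2)
    exact_mod_cast this
  -- lower bound for Frobenius norm of A
  have hfA : (N : ℝ) ^ 2 / d ≤ ∑ a, ∑ b, ‖A a b‖ ^ 2 := by
    have hCS : (∑ a, r a) ^ 2 ≤ (d : ℝ) * ∑ a, (r a) ^ 2 := by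
      have := sq_sum_le_card_mul_sum_sq (s := (Finset.univ : Finset (Fin d))) (f := r)
      simpa using this
    have hdiagle : ∑ a, (r a) ^ 2 ≤ ∑ a, ∑ b, ‖A a b‖ ^ 2 := by
      have h1 : ∀ a, (r a) ^ 2 = ‖A a a‖ ^ 2 := by
        intro a
        rw [hAdiag a, Complex.norm_real, Real.norm_of_nonneg (hrnonneg a)]
      calc ∑ a, (r a) ^ 2 = ∑ a, ‖A a a‖ ^ 2 := Finset.sum_congr rfl fun a _ => h1 a
        _ ≤ ∑ a, ∑ b, ‖A a b‖ ^ 2 := by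
              refine Finset.sum_le_sum fun a _ => ?_
              exact Finset.single_le_sum (f := fun b => ‖A a b‖ ^ 2)
                (fun b _ => sq_nonneg _) (Finset.mem_univ a)
    rw [div_le_iff₀ hd0]
    calc (N : ℝ) ^ 2 = (∑ a, r a) ^ 2 := by rw [hrsum]
      _ ≤ (d : ℝ) * ∑ a, (r a) ^ 2 := hCS
      _ ≤ (d : ℝ) * ∑ a, ∑ b, ‖A a b‖ ^ 2 :=
          mul_le_mul_of_nonneg_left hdiagle (by linarith)
      _ = (∑ a, ∑ b, ‖A a b‖ ^ 2) * d := mul_comm _ _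
  -- off-diagonal sum
  set od : Finset (Fin N × Fin N) := (Finset.univ : Finset (Fin N)).offDiag with hoddef
  have hodcard : (od.card : ℝ) = (N : ℝ) * ((N : ℝ) - 1) := by
    have : od.card = N * N - N := by simp [hoddef, Finset.offDiag_card]
    rw [this]
    have hNN : N ≤ N * N := Nat.le_mul_of_pos_left N (by omega)
    push_cast [Nat.cast_sub hNN]
    ring
  have hsplit : ∑ p ∈ od, ‖G p.1 p.2‖ ^ 2 = (∑ i, ∑ j, ‖G i j‖ ^ 2) - N := by
    have hdi : ∑ p ∈ (Finset.univ : Finset (Fin N)).diag, ‖G p.1 p.2‖ ^ 2 = (N : ℝ) := by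
      rw [Finset.sum_diag]
      simp [hGdiag]
    have hun : ∑ p ∈ (Finset.univ : Finset (Fin N)).diag, ‖G p.1 p.2‖ ^ 2
        + ∑ p ∈ od, ‖G p.1 p.2‖ ^ 2 = ∑ i, ∑ j, ‖G i j‖ ^ 2 := by
      rw [← Finset.sum_union (Finset.disjoint_diag_offDiag _), Finset.diag_union_offDiag]
      rw [← Finset.sum_product']
    linarith [hun, hdi]
  have hSlb : (N : ℝ) * (((N : ℝ) - d) / d) ≤ ∑ p ∈ od, ‖G p.1 p.2‖ ^ 2 := by
    rw [hsplit]
    have : (N : ℝ) * (((N : ℝ) - d) / d) = (N : ℝ) ^ 2 / d - N := by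
      field_simp
    rw [this]
    linarith [hfA, htr]
  -- pigeonhole: some off-diagonal entry is large
  set c : ℝ := ((N : ℝ) - d) / (d * ((N : ℝ) - 1)) with hcdef
  have hodne : od.Nonempty := by
    refine ⟨(⟨0, by omega⟩, ⟨1, by omega⟩), ?_⟩
    simp [hoddef, Finset.mem_offDiag, Fin.ext_iff]
  have hkey : ∃ p ∈ od, c ≤ ‖G p.1 p.2‖ ^ 2 := by
    have hsum : ∑ _p ∈ od, c ≤ ∑ p ∈ od, ‖G p.1 p.2‖ ^ 2 := by
      rw [Finset.sum_const, nsmul_eq_mul]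
      refine le_trans ?_ hSlb
      rw [hodcard, hcdef]
      have heq : (N : ℝ) * ((N : ℝ) - 1) * (((N : ℝ) - d) / (d * ((N : ℝ) - 1)))
          = (N : ℝ) * (((N : ℝ) - d) / d) := by
        field_simp
      rw [heq]
    exact Finset.exists_le_of_sum_le hodne hsum
  obtain ⟨p, hpod, hpc⟩ := hkey
  have hpne : p.1 ≠ p.2 := (Finset.mem_offDiag.mp hpod).2.2
  -- conclude via sSup
  have hmem : ‖G p.1 p.2‖ ∈ {x | ∃ i j, i ≠ j ∧ x = ‖(Dᴴ * D) i j‖} :=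
    ⟨p.1, p.2, hpne, rfl⟩
  have hbdd : BddAbove {x | ∃ i j, i ≠ j ∧ x = ‖(Dᴴ * D) i j‖} := by
    have hsub : {x | ∃ i j, i ≠ j ∧ x = ‖(Dᴴ * D) i j‖}
        ⊆ Set.range (fun q : Fin N × Fin N => ‖(Dᴴ * D) q.1 q.2‖) := by
      rintro x ⟨i, j, _, rfl⟩
      exact ⟨(i, j), rfl⟩
    exact (Set.finite_range _).bddAbove.mono hsub
  have hle : ‖G p.1 p.2‖ ≤ coherence D := le_csSup hbdd hmem
  refine le_trans ?_ hle
  have h := Real.sqrt_le_sqrt hpc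
  rwa [Real.sqrt_sq (norm_nonneg _)] at h
end

section
/- Let D ∈ ℂ^{m×N} (with unit-norm columns, coherence μ > 0) and let x ∈ ℂ^N satisfy ‖x‖₀ < (1 + 1/μ)/2. Then x is the unique minimizer of ‖z‖₀ subject to Dz = Dx. -/
open Matrix

/-- Spark-type lemma: a nonzero kernel vector of a Gram matrix with unit diagonal and
off-diagonal entries bounded by `μ` has support of size at least `1 + 1/μ`. -/
lemma spark_bound {N : ℕ} (G : Matrix (Fin N) (Fin N) ℂ) (μ : ℝ) (hμpos : 0 < μ)
    (hdiag : ∀ i, G i i = 1) (hoff : ∀ i j, i ≠ j → ‖G i j‖ ≤ μ)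
    (w : Fin N → ℂ) (hw : w ≠ 0) (hker : G.mulVec w = 0)
    (W : Finset (Fin N)) (hW : ∀ j, j ∈ W ↔ w j ≠ 0) :
    1 + 1 / μ ≤ (W.card : ℝ) := by
  classical
  have hWne : W.Nonempty := by
    obtain ⟨j, hj⟩ := Function.ne_iff.mp hw
    exact ⟨j, (hW j).mpr hj⟩
  obtain ⟨i₀, hi₀W, hmax⟩ := W.exists_max_image (fun j => ‖w j‖) hWne
  have hwi₀ : w i₀ ≠ 0 := (hW i₀).mp hi₀W
  have hwi₀pos : 0 < ‖w i₀‖ := norm_pos_iff.mpr hwi₀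
  have hrow : ∑ j, G i₀ j * w j = 0 := congrFun hker i₀
  have hsplit : w i₀ = -∑ j ∈ Finset.univ.erase i₀, G i₀ j * w j := by
    have h := Finset.sum_erase_add Finset.univ (fun j => G i₀ j * w j) (Finset.mem_univ i₀)
    simp only [hdiag i₀, one_mul] at h
    linear_combination h + hrow
  have hbound : ‖w i₀‖ ≤ ((W.card : ℝ) - 1) * (μ * ‖w i₀‖) := by
    calc ‖w i₀‖ = ‖∑ j ∈ Finset.univ.erase i₀, G i₀ j * w j‖ := by rw [hsplit, norm_neg]
    _ ≤ ∑ j ∈ Finset.univ.erase i₀, ‖G i₀ j * w j‖ := norm_sum_le _ _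
    _ = ∑ j ∈ W.erase i₀, ‖G i₀ j * w j‖ := by
        refine (Finset.sum_subset ?_ ?_).symm
        · intro j hj
          exact Finset.mem_erase.mpr ⟨(Finset.mem_erase.mp hj).1, Finset.mem_univ j⟩
        · intro j hj hjne
          have hji : j ≠ i₀ := (Finset.mem_erase.mp hj).1
          have hwj : w j = 0 := by
            by_contra hc
            exact hjne (Finset.mem_erase.mpr ⟨hji, (hW j).mpr hc⟩)
          simp [hwj]
    _ ≤ ∑ j ∈ W.erase i₀, μ * ‖w i₀‖ := by
        refine Finset.sum_le_sum fun j hj => ?_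
        rw [norm_mul]
        have hjW := Finset.mem_of_mem_erase hj
        have hji : i₀ ≠ j := fun h => (Finset.mem_erase.mp hj).1 h.symm
        exact mul_le_mul (hoff i₀ j hji) (hmax j hjW) (norm_nonneg _) hμpos.le
    _ = ((W.card : ℝ) - 1) * (μ * ‖w i₀‖) := by
        rw [Finset.sum_const, nsmul_eq_mul, Finset.card_erase_of_mem hi₀W]
        have : (1 : ℕ) ≤ W.card := Finset.card_pos.mpr hWne
        push_cast [Nat.cast_sub this]
        ring
  have h1 : 1 ≤ ((W.card : ℝ) - 1) * μ := by
    have := (mul_le_mul_iff_of_pos_right hwi₀pos).mp (by linarith [hbound] : 1 * ‖w i₀‖ ≤ (((W.card : ℝ) - 1) * μ) * ‖w i₀‖)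
    linarith
  have : 1 / μ ≤ (W.card : ℝ) - 1 := (div_le_iff₀ hμpos).mpr h1
  linarith

/-- The classical deterministic sparsity threshold: if `‖x‖₀ < (1 + 1/μ)/2` where `μ > 0` is
the coherence of the unit-norm dictionary `D`, then `x` is the unique minimizer of `‖z‖₀`
subject to `Dz = Dx`. -/
theorem l0_unique_coherence_threshold {m N : ℕ} (D : Matrix (Fin m) (Fin N) ℂ)
    (hunit : ∀ j, ∑ i, ‖D i j‖ ^ 2 = 1) (μ : ℝ) (hμpos : 0 < μ) (hμ : coherence D = μ)
    (x : Fin N → ℂ) (T : Finset (Fin N)) (hT : ∀ j, j ∈ T ↔ x j ≠ 0)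
    (hcard : (T.card : ℝ) < (1 + 1 / μ) / 2) :
    ∀ z : Fin N → ℂ, z ≠ x → D.mulVec z = D.mulVec x →
      ∀ Tz : Finset (Fin N), (∀ j, j ∈ Tz ↔ z j ≠ 0) → T.card < Tz.card := by
  classical
  intro z hzx hDz Tz hTz
  set G := Dᴴ * D with hG
  -- diagonal entries are 1
  have hdiag : ∀ i, G i i = 1 := by
    intro i
    have h1 : G i i = ∑ k, (starRingEnd ℂ) (D k i) * D k i := by
      simp [hG, Matrix.mul_apply, Matrix.conjTranspose_apply]
    have h2 : ∀ k, (starRingEnd ℂ) (D k i) * D k i = ((‖D k i‖ ^ 2 : ℝ) : ℂ) := by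
      intro k
      rw [mul_comm, Complex.mul_conj']
      push_cast
      ring
    rw [h1]
    simp_rw [h2]
    rw [← Complex.ofReal_sum, hunit i, Complex.ofReal_one]
  -- off-diagonal entries bounded by μ
  have hoff : ∀ i j, i ≠ j → ‖G i j‖ ≤ μ := by
    intro i j hij
    rw [← hμ]
    refine le_csSup ?_ ⟨i, j, hij, rfl⟩
    have : {r | ∃ i j : Fin N, i ≠ j ∧ r = ‖G i j‖} ⊆
        Set.range (fun p : Fin N × Fin N => ‖G p.1 p.2‖) := by
      rintro r ⟨a, b, _, rfl⟩; exact ⟨(a, b), rfl⟩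
    exact ((Set.finite_range _).subset this).bddAbove
  set w : Fin N → ℂ := z - x with hw
  have hwne : w ≠ 0 := sub_ne_zero.mpr hzx
  have hker : G.mulVec w = 0 := by
    rw [hG, ← Matrix.mulVec_mulVec, hw, Matrix.mulVec_sub, hDz, sub_self, Matrix.mulVec_zero]
  set W : Finset (Fin N) := Finset.univ.filter (fun j => w j ≠ 0) with hWdef
  have hWmem : ∀ j, j ∈ W ↔ w j ≠ 0 := by intro j; simp [hWdef]
  have hspark := spark_bound G μ hμpos hdiag hoff w hwne hker W hWmem
  have hsub : W ⊆ T ∪ Tz := by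
    intro j hj
    have hwj : w j ≠ 0 := (hWmem j).mp hj
    by_contra hnot
    simp only [Finset.mem_union, not_or] at hnot
    have hx : x j = 0 := by_contra fun h => hnot.1 ((hT j).mpr h)
    have hz : z j = 0 := by_contra fun h => hnot.2 ((hTz j).mpr h)
    exact hwj (by simp [hw, hx, hz])
  have hcardW : (W.card : ℝ) ≤ T.card + Tz.card := by
    calc (W.card : ℝ) ≤ ((T ∪ Tz).card : ℝ) := by exact_mod_cast Finset.card_le_card hsub
    _ ≤ T.card + Tz.card := by exact_mod_cast Finset.card_union_le T Tz
  have : (T.card : ℝ) < Tz.card := by linarith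
  exact_mod_cast this
end
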